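/- Let f ∈ ℂ[X][Y] be a polynomial in Y with coefficients in ℂ[X] which is monic in Y and has degree at least 1 in Y. Let s : ℂ → ℂ be an entire function (differentiable on all of ℂ) such that f(z, s(z)) = 0 for every z ∈ ℂ (i.e., evaluating each coefficient of f at z and then evaluating the resulting one-variable polynomial at s(z) gives 0). Then s is a polynomial function: there exists P ∈ ℂ[X] with s(z) = P(z) for all z ∈ ℂ. -/

import Mathlib

open Polynomial Finset

/-- Evaluation bound for a polynomial at large arguments. -/
lemma aux_eval_bound (q : Polynomial ℂ) (M : ℕ) (hM : q.natDegree ≤ M) (z : ℂ)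
    (hz : 1 ≤ ‖z‖) :
    ‖q.eval z‖ ≤ (∑ j ∈ range (q.natDegree + 1), ‖q.coeff j‖) * ‖z‖ ^ M := by
  rw [Polynomial.eval_eq_sum_range, Finset.sum_mul]
  refine (norm_sum_le _ _).trans (Finset.sum_le_sum fun j hj => ?_)
  rw [norm_mul, norm_pow]
  refine mul_le_mul_of_nonneg_left ?_ (norm_nonneg _)
  exact pow_le_pow_right₀ hz ((Finset.mem_range_succ_iff.mp hj).trans hM)

/-- Cauchy-type bound for roots of monic polynomials. -/
lemma aux_root_bound (p : Polynomial ℂ) (hp : p.Monic) (hd : 1 ≤ p.natDegree) (w : ℂ)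
    (hw : p.eval w = 0) :
    ‖w‖ ≤ max 1 (∑ i ∈ range p.natDegree, ‖p.coeff i‖) := by
  by_contra h
  push_neg at h
  have h1 : 1 < ‖w‖ := lt_of_le_of_lt (le_max_left _ _) h
  have hB : (∑ i ∈ range p.natDegree, ‖p.coeff i‖) < ‖w‖ := lt_of_le_of_lt (le_max_right _ _) h
  set n := p.natDegree with hn
  have heval : p.eval w = w ^ n + ∑ i ∈ range n, p.coeff i * w ^ i := by
    rw [Polynomial.eval_eq_sum_range, Finset.sum_range_succ, hp.coeff_natDegree, one_mul,
      add_comm]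
  have hkey : ‖w‖ ^ n ≤ (∑ i ∈ range n, ‖p.coeff i‖) * ‖w‖ ^ (n - 1) := by
    have : w ^ n = -∑ i ∈ range n, p.coeff i * w ^ i := by
      have := heval.symm.trans hw
      linear_combination this
    calc ‖w‖ ^ n = ‖w ^ n‖ := (norm_pow _ _).symm
      _ = ‖∑ i ∈ range n, p.coeff i * w ^ i‖ := by rw [this, norm_neg]
      _ ≤ ∑ i ∈ range n, ‖p.coeff i‖ * ‖w‖ ^ i := by
          refine (norm_sum_le _ _).trans (Finset.sum_le_sum fun i _ => ?_)
          rw [norm_mul, norm_pow]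
      _ ≤ ∑ i ∈ range n, ‖p.coeff i‖ * ‖w‖ ^ (n - 1) := by
          refine Finset.sum_le_sum fun i hi => ?_
          refine mul_le_mul_of_nonneg_left ?_ (norm_nonneg _)
          exact pow_le_pow_right₀ h1.le (Nat.le_sub_one_of_lt (Finset.mem_range.mp hi))
      _ = (∑ i ∈ range n, ‖p.coeff i‖) * ‖w‖ ^ (n - 1) := (Finset.sum_mul _ _ _).symm
  have hpow : ‖w‖ ^ n = ‖w‖ * ‖w‖ ^ (n - 1) := by
    rw [← pow_succ']
    congr 1
    omega
  rw [hpow] at hkey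
  have hwpos : (0 : ℝ) < ‖w‖ ^ (n - 1) := pow_pos (lt_trans one_pos h1) _
  nlinarith

/-- Polynomial-growth Liouville theorem. -/
lemma aux_poly_liouville : ∀ (N : ℕ) (s : ℂ → ℂ), Differentiable ℂ s →
    ∀ C : ℝ, (∀ z : ℂ, 1 ≤ ‖z‖ → ‖s z‖ ≤ C * ‖z‖ ^ N) →
    ∃ P : Polynomial ℂ, ∀ z : ℂ, s z = P.eval z := by
  intro N
  induction N with
  | zero =>
    intro s hs C hb
    obtain ⟨C', hC'⟩ := (isCompact_closedBall (0 : ℂ) 1).exists_bound_of_continuousOn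
      hs.continuous.continuousOn
    have hbd : Bornology.IsBounded (Set.range s) := by
      rw [Metric.isBounded_iff_subset_closedBall 0]
      refine ⟨max C C', ?_⟩
      rintro _ ⟨z, rfl⟩
      simp only [Metric.mem_closedBall, dist_zero_right]
      rcases le_or_gt 1 ‖z‖ with h | h
      · have := hb z h
        simp only [pow_zero, mul_one] at this
        exact this.trans (le_max_left _ _)
      · exact (hC' z (by simpa [Metric.mem_closedBall, dist_zero_right] using h.le)).trans
          (le_max_right _ _)
    obtain ⟨c, hc⟩ := hs.exists_const_forall_eq_of_bounded hbd
    exact ⟨Polynomial.C c, fun z => by simp [← hc z]⟩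
  | succ N ih =>
    intro s hs C hb
    set g : ℂ → ℂ := dslope s 0 with hg
    have hgd : Differentiable ℂ g := by
      rw [← differentiableOn_univ]
      exact (Complex.differentiableOn_dslope Filter.univ_mem).mpr hs.differentiableOn
    have hgb : ∀ z : ℂ, 1 ≤ ‖z‖ → ‖g z‖ ≤ (C + ‖s 0‖) * ‖z‖ ^ N := by
      intro z hz
      have hz0 : z ≠ 0 := by
        intro h; rw [h] at hz; simp at hz; linarith
      have : g z = (s z - s 0) / z := by
        rw [hg, dslope_of_ne s hz0, slope_def_field]
        field_simp
        ring
      rw [this, norm_div]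
      rw [div_le_iff₀ (lt_of_lt_of_le one_pos hz)]
      have h1 : ‖s z - s 0‖ ≤ C * ‖z‖ ^ (N + 1) + ‖s 0‖ :=
        (norm_sub_le _ _).trans (add_le_add_left (hb z hz) _)
      have h2 : C * ‖z‖ ^ (N + 1) + ‖s 0‖ ≤ (C + ‖s 0‖) * ‖z‖ ^ N * ‖z‖ := by
        have hzn : 1 ≤ ‖z‖ ^ N := one_le_pow₀ hz
        have h3 : 1 ≤ ‖z‖ ^ N * ‖z‖ := by
          calc (1:ℝ) = 1 * 1 := by ring
          _ ≤ ‖z‖ ^ N * ‖z‖ := mul_le_mul hzn hz zero_le_one (by positivity)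
        have hs0 : ‖s 0‖ ≤ ‖s 0‖ * (‖z‖ ^ N * ‖z‖) :=
          le_mul_of_one_le_right (norm_nonneg _) h3
        have hC : C * ‖z‖ ^ (N + 1) = C * (‖z‖ ^ N * ‖z‖) := by ring
        rw [hC, mul_assoc, add_mul]
        linarith
      linarith
    obtain ⟨Q, hQ⟩ := ih g hgd (C + ‖s 0‖) hgb
    refine ⟨Polynomial.C (s 0) + Polynomial.X * Q, fun z => ?_⟩
    have := sub_smul_dslope s 0 z
    simp only [sub_zero, smul_eq_mul] at this
    rw [Polynomial.eval_add, Polynomial.eval_C, Polynomial.eval_mul, Polynomial.eval_X, ← hQ z]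
    rw [← hg] at this
    linear_combination -this

/-- An entire function which is a root of a polynomial `f ∈ ℂ[X][Y]`, monic in `Y` of
degree at least `1`, is a polynomial function. -/
theorem stmt_2 (f : Polynomial (Polynomial ℂ)) (hmonic : f.Monic) (hdeg : 1 ≤ f.natDegree)
    (s : ℂ → ℂ) (hs : Differentiable ℂ s)
    (hroot : ∀ z : ℂ, Polynomial.eval₂ (Polynomial.evalRingHom z) (s z) f = 0) :
    ∃ P : Polynomial ℂ, ∀ z : ℂ, s z = P.eval z := by
  set n := f.natDegree with hn
  set M : ℕ := (range n).sup (fun i => (f.coeff i).natDegree) with hM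
  set K : ℝ := ∑ i ∈ range n, (∑ j ∈ range ((f.coeff i).natDegree + 1), ‖(f.coeff i).coeff j‖)
    with hK
  have hK0 : 0 ≤ K := Finset.sum_nonneg fun i _ => Finset.sum_nonneg fun j _ => norm_nonneg _
  refine aux_poly_liouville M s hs (1 + K) fun z hz => ?_
  -- the specialized polynomial
  set p : Polynomial ℂ := f.map (Polynomial.evalRingHom z) with hp
  have hpm : p.Monic := hmonic.map _
  have hpd : p.natDegree = n := hmonic.natDegree_map _
  have hzp : p.eval (s z) = 0 := by
    rw [hp, Polynomial.eval_map]; exact hroot z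
  have hroot_bd := aux_root_bound p hpm (hpd ▸ hdeg) (s z) hzp
  have hcoeff : ∀ i, p.coeff i = (f.coeff i).eval z := fun i => Polynomial.coeff_map _ _
  have hzM : 1 ≤ ‖z‖ ^ M := one_le_pow₀ hz
  have hsum : (∑ i ∈ range p.natDegree, ‖p.coeff i‖) ≤ K * ‖z‖ ^ M := by
    rw [hpd, hK, Finset.sum_mul]
    refine Finset.sum_le_sum fun i hi => ?_
    rw [hcoeff i]
    exact aux_eval_bound (f.coeff i) M (Finset.le_sup (f := fun i => (f.coeff i).natDegree) hi) z hz
  refine hroot_bd.trans (max_le ?_ ?_)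
  · nlinarith
  · nlinarith
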